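/- For every n ≥ 1 and d ≥ 1, the Lie algebra 𝔰𝔩_n(ℂ[u^{±1},v^{±1}]⋊Γ) is isomorphic, as a Lie algebra over ℂ, to the toroidal Lie algebra 𝔰𝔩_{nd}(ℂ[s^{±1},t^{±1}]), where ℂ[s^{±1},t^{±1}] is the Laurent polynomial ring in two variables. -/

import Mathlib

/-!
STATEMENT 11: For every `n ≥ 1` and `d ≥ 1`, the Lie algebra
`𝔰𝔩_n(ℂ[u^{±1}, v^{±1}] ⋊ Γ)` is isomorphic, as a Lie algebra over ℂ, to the toroidal
Lie algebra `𝔰𝔩_{nd}(ℂ[s^{±1}, t^{±1}])`.  Here `𝔰𝔩_n(R)` denotes the derived Lie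
subalgebra `[𝔤𝔩_n(R), 𝔤𝔩_n(R)]`, and the Laurent polynomial ring in two variables is
formalized as iterated Laurent polynomials.
-/


noncomputable section
open LaurentPolynomial

abbrev R2 : Type := LaurentPolynomial (LaurentPolynomial ℂ)

def mono (m p : ℤ) : R2 := T m * C (T p)

lemma mono_def (m p : ℤ) : mono m p = AddMonoidAlgebra.single m (T p) := by
  rw [mono, mul_comm, ← single_eq_C_mul_T]

lemma mono_mul (m p m' p' : ℤ) : mono m p * mono m' p' = mono (m + m') (p + p') := by
  rw [mono, mono, mono, T_add, T_add, map_mul]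
  ring

lemma mono_zero : mono 0 0 = 1 := by simp [mono]

def bC : Module.Basis ℤ ℂ (LaurentPolynomial ℂ) := AddMonoidAlgebra.basis ℤ ℂ

def bR : Module.Basis (ℤ × ℤ) ℂ R2 :=
  ((Finsupp.basis (fun _ : ℤ => bC)).reindex (Equiv.sigmaEquivProd ℤ ℤ)).map
    (AddMonoidAlgebra.coeffLinearEquiv ℂ).symm

lemma bR_apply (m p : ℤ) : bR (m, p) = mono m p := by
  rw [mono_def]
  rw [bR]
  erw [Module.Basis.map_apply, Module.Basis.reindex_apply, Finsupp.coe_basis]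
  simp only [Equiv.sigmaEquivProd, Equiv.coe_fn_symm_mk]
  have : bC p = T p := rfl
  rw [this]
  rfl

def matLin (d : ℕ) : (Fin d → Fin d → R2) ≃ₗ[ℂ] Matrix (Fin d) (Fin d) R2 :=
  { Matrix.of with map_add' := fun _ _ => rfl, map_smul' := fun _ _ => rfl }

def bM (d : ℕ) : Module.Basis (Σ _i : Fin d, Σ _j : Fin d, ℤ × ℤ) ℂ (Matrix (Fin d) (Fin d) R2) :=
  (Pi.basis fun _i : Fin d => Pi.basis fun _j : Fin d => bR).map (matLin d)

lemma bM_apply (d : ℕ) (i j : Fin d) (m p : ℤ) :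
    bM d ⟨i, j, (m, p)⟩ = Matrix.single i j (mono m p) := by
  simp only [bM, Module.Basis.map_apply, Pi.basis_apply, bR_apply]
  rw [Matrix.single_eq_of_single_single]
  rfl



section params
variable {d : ℕ} {ζ : ℂ}

lemma zpow_congr (hd : 0 < d) (hζ : IsPrimitiveRoot ζ d) {x y : ℤ}
    (h : ((x : ZMod d) = (y : ZMod d))) : ζ ^ x = ζ ^ y := by
  have hne : ζ ≠ 0 := hζ.ne_zero hd.ne'
  have hdvd : (d : ℤ) ∣ (x - y) := by
    rw [← ZMod.intCast_zmod_eq_zero_iff_dvd]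
    push_cast
    rw [h]; ring
  have h1 : ζ ^ (x - y) = 1 := (hζ.zpow_eq_one_iff_dvd _).mpr hdvd
  calc ζ ^ x = ζ ^ (y + (x - y)) := by ring_nf
    _ = ζ ^ y * ζ ^ (x - y) := zpow_add₀ hne _ _
    _ = ζ ^ y := by rw [h1, mul_one]

lemma ediv_add_ediv (hd : 0 < d) {x y : ℤ} (hx : (d:ℤ) ∣ x) (hy : (d:ℤ) ∣ y) :
    x / (d:ℤ) + y / (d:ℤ) = (x + y) / (d:ℤ) := by
  obtain ⟨x', rfl⟩ := hx
  obtain ⟨y', rfl⟩ := hy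
  have hd' : (d:ℤ) ≠ 0 := by exact_mod_cast hd.ne'
  rw [← mul_add, Int.mul_ediv_cancel_left _ hd', Int.mul_ediv_cancel_left _ hd',
    Int.mul_ediv_cancel_left _ hd']

lemma cond_dvd (hd : 0 < d) {a b : ℤ} {i j : Fin d}
    (h : ((i:ℕ) : ZMod d) = ((j:ℕ) : ZMod d) + ((a - b : ℤ) : ZMod d)) :
    (d:ℤ) ∣ (a - b + (j:ℕ) - (i:ℕ)) := by
  rw [← ZMod.intCast_zmod_eq_zero_iff_dvd]
  push_cast
  rw [h]; push_cast; ring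

end params

def Mmat (d : ℕ) (ζ : ℂ) (a b : ℤ) (c : ZMod d) : Matrix (Fin d) (Fin d) R2 :=
  Matrix.of fun i j =>
    if ((i:ℕ) : ZMod d) = ((j:ℕ) : ZMod d) + ((a - b : ℤ) : ZMod d)
      then ζ ^ ((c.val : ℤ) * ((j:ℕ) : ℤ)) • mono ((a - b + ((j:ℕ):ℤ) - ((i:ℕ):ℤ)) / (d:ℤ)) b
      else 0

section params2
variable {d : ℕ} {ζ : ℂ}

lemma M_one (hd : 0 < d) : Mmat d ζ 0 0 0 = 1 := by
  ext i j
  simp only [Mmat, Matrix.of_apply]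
  rw [Matrix.one_apply]
  by_cases h : i = j
  · subst h
    rw [if_pos (by norm_num), if_pos rfl]
    norm_num [mono_zero, ZMod.val_zero]
  · rw [if_neg, if_neg h]
    intro hc
    apply h
    apply Fin.ext
    have : ((i:ℕ) : ZMod d) = ((j:ℕ) : ZMod d) := by rw [hc]; norm_num
    rw [← ZMod.val_cast_of_lt i.isLt, ← ZMod.val_cast_of_lt j.isLt, this]

lemma M_mul (hd : 0 < d) (hζ : IsPrimitiveRoot ζ d) (a b : ℤ) (c : ZMod d) (e f : ℤ) (g : ZMod d) :
    Mmat d ζ a b c * Mmat d ζ e f g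
      = (ζ ^ ((c.val : ℤ) * (e - f))) • Mmat d ζ (a+e) (b+f) (c+g) := by
  haveI : NeZero d := ⟨hd.ne'⟩
  refine Matrix.ext fun i k => ?_
  rw [Matrix.mul_apply, Matrix.smul_apply]
  set j₀ : Fin d := ⟨(((k:ℕ) : ZMod d) + ((e - f : ℤ) : ZMod d)).val, ZMod.val_lt _⟩ with hj₀def
  have hj₀ : ((j₀:ℕ) : ZMod d) = ((k:ℕ) : ZMod d) + ((e - f : ℤ) : ZMod d) := by
    simp [hj₀def, ZMod.natCast_val, ZMod.cast_id]
  have key : ∀ j : Fin d, j ∈ Finset.univ → j ≠ j₀ →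
      (Mmat d ζ a b c) i j * (Mmat d ζ e f g) j k = 0 := by
    intro j _ hj
    have hnc : ¬ (((j:ℕ) : ZMod d) = ((k:ℕ) : ZMod d) + ((e - f : ℤ) : ZMod d)) := by
      intro hcc
      apply hj
      apply Fin.ext
      have h2 : ((j:ℕ) : ZMod d) = ((j₀:ℕ) : ZMod d) := by rw [hcc, hj₀]
      rw [← ZMod.val_cast_of_lt j.isLt, ← ZMod.val_cast_of_lt j₀.isLt, h2]
    simp only [Mmat, Matrix.of_apply, if_neg hnc, mul_zero]
  rw [Finset.sum_eq_single_of_mem j₀ (Finset.mem_univ _) key]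
  by_cases hcond : ((i:ℕ) : ZMod d) = ((k:ℕ) : ZMod d) + (((a+e) - (b+f) : ℤ) : ZMod d)
  · have hc1 : ((i:ℕ) : ZMod d) = ((j₀:ℕ) : ZMod d) + ((a - b : ℤ) : ZMod d) := by
      rw [hj₀, hcond]; push_cast; ring
    simp only [Mmat, Matrix.of_apply, if_pos hc1, if_pos hj₀, if_pos hcond]
    rw [smul_mul_smul_comm, mono_mul, smul_smul]
    have hne : ζ ≠ 0 := hζ.ne_zero hd.ne'
    rw [← zpow_add₀ hne, ← zpow_add₀ hne]
    have hj₀' := hj₀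
    push_cast [ZMod.natCast_val, ZMod.cast_id] at hj₀'
    have hz : ζ ^ ((c.val : ℤ) * ((j₀:ℕ):ℤ) + (g.val : ℤ) * ((k:ℕ):ℤ))
        = ζ ^ ((c.val : ℤ) * (e - f) + (((c+g).val : ℤ)) * ((k:ℕ):ℤ)) := by
      apply zpow_congr hd hζ
      push_cast [ZMod.natCast_val, ZMod.cast_id]
      rw [hj₀']
      ring
    rw [hz]
    congr 2
    rw [ediv_add_ediv hd (cond_dvd hd hc1) (cond_dvd hd hj₀)]
    congr 1
    ring
  · have hnc1 : ¬ ((i:ℕ) : ZMod d) = ((j₀:ℕ) : ZMod d) + ((a - b : ℤ) : ZMod d) := by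
      intro hc1
      apply hcond
      rw [hc1, hj₀]; push_cast; ring
    simp only [Mmat, Matrix.of_apply, if_neg hnc1, if_neg hcond, zero_mul, smul_zero]

end params2

section geom
variable {d : ℕ} {ζ : ℂ}

lemma sum_zpow_fin (hd : 0 < d) (hζ : IsPrimitiveRoot ζ d) (E : ℤ) :
    ∑ j : Fin d, ζ ^ (E * ((j:ℕ):ℤ)) = if ((E : ZMod d) = 0) then (d:ℂ) else 0 := by
  have hterm : ∀ j : Fin d, ζ ^ (E * ((j:ℕ):ℤ)) = (ζ ^ E) ^ (j:ℕ) := by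
    intro j; rw [← zpow_natCast (ζ^E), ← zpow_mul]
  simp_rw [hterm]
  rw [Fin.sum_univ_eq_sum_range (fun j => (ζ^E)^j) d]
  by_cases hE : ((E : ZMod d) = 0)
  · have h1 : ζ ^ E = 1 :=
      (hζ.zpow_eq_one_iff_dvd E).mpr ((ZMod.intCast_zmod_eq_zero_iff_dvd E d).mp hE)
    simp [h1, hE]
  · have hμ : ζ ^ E ≠ 1 := by
      intro h1
      exact hE ((ZMod.intCast_zmod_eq_zero_iff_dvd E d).mpr ((hζ.zpow_eq_one_iff_dvd E).mp h1))
  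
    rw [if_neg hE, geom_sum_eq hμ]
    have hμd : (ζ^E)^d = 1 := by
      rw [← zpow_natCast, ← zpow_mul, mul_comm]
      exact (hζ.zpow_eq_one_iff_dvd _).mpr ⟨E, rfl⟩
    rw [hμd]; simp

def zmodFinEquiv (d : ℕ) [NeZero d] : Fin d ≃ ZMod d where
  toFun j := ((j:ℕ) : ZMod d)
  invFun c := ⟨c.val, ZMod.val_lt c⟩
  left_inv j := Fin.ext (ZMod.val_cast_of_lt j.isLt)
  right_inv c := by simp [ZMod.natCast_val, ZMod.cast_id]

lemma sum_zpow_zmod [NeZero d] (hd : 0 < d) (hζ : IsPrimitiveRoot ζ d) (E : ℤ) :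
    ∑ c : ZMod d, ζ ^ (((c.val:ℕ):ℤ) * E) = if ((E : ZMod d) = 0) then (d:ℂ) else 0 := by
  rw [← sum_zpow_fin hd hζ E]
  rw [← Equiv.sum_comp (zmodFinEquiv d) (fun c : ZMod d => ζ ^ (((c.val:ℕ):ℤ) * E))]
  apply Finset.sum_congr rfl
  intro j _
  simp only [zmodFinEquiv, Equiv.coe_fn_mk, ZMod.val_cast_of_lt j.isLt]
  rw [mul_comm]

lemma fin_sub_zero_iff {d : ℕ} (hd : 0 < d) (j k : Fin d) :
    ((((k:ℕ):ℤ) - ((j:ℕ):ℤ) : ℤ) : ZMod d) = 0 ↔ k = j := by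
  constructor
  · intro h
    push_cast at h
    rw [sub_eq_zero] at h
    apply Fin.ext
    rw [← ZMod.val_cast_of_lt k.isLt, ← ZMod.val_cast_of_lt j.isLt, h]
  · rintro rfl; simp

end geom


/-- Data exhibiting `A` as the skew group algebra `ℂ[u^{±1}, v^{±1}] ⋊ (ℤ/dℤ)`,
where `b a b' c` represents the basis element `u^a v^{b'} ξ^c`. -/
structure SkewLaurent2Algebra (d : ℕ) (ζ : ℂ) (A : Type) [Ring A] [Algebra ℂ A] where
  b : ℤ → ℤ → ZMod d → A
  basis : Module.Basis (ℤ × ℤ × ZMod d) ℂ A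
  basis_eq : ∀ (a b' : ℤ) (c : ZMod d), basis (a, b', c) = b a b' c
  b_one : b 0 0 0 = 1
  b_mul : ∀ (a b' : ℤ) (c : ZMod d) (e f : ℤ) (g : ZMod d),
    b a b' c * b e f g = (ζ ^ ((c.val : ℤ) * (e - f))) • b (a + e) (b' + f) (c + g)


def rowf (d : ℕ) [NeZero d] (a b : ℤ) (j : Fin d) : Fin d :=
  ⟨(((j:ℕ) : ZMod d) + ((a - b : ℤ) : ZMod d)).val, ZMod.val_lt _⟩

section expand
variable {d : ℕ} {ζ : ℂ}

lemma rowf_cast [NeZero d] (a b : ℤ) (j : Fin d) :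
    (((rowf d a b j : ℕ)) : ZMod d) = ((j:ℕ) : ZMod d) + ((a - b : ℤ) : ZMod d) := by
  simp [rowf, ZMod.natCast_val, ZMod.cast_id]

lemma M_expand [NeZero d] (a b : ℤ) (c : ZMod d) :
    Mmat d ζ a b c = ∑ j : Fin d, ζ ^ (((c.val:ℕ):ℤ) * ((j:ℕ):ℤ)) •
      Matrix.single (rowf d a b j) j
        (mono ((a - b + ((j:ℕ):ℤ) - ((rowf d a b j : ℕ):ℤ))/(d:ℤ)) b) := by
  refine Matrix.ext fun i k => ?_
  rw [Matrix.sum_apply]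
  rw [Finset.sum_eq_single_of_mem k (Finset.mem_univ _) ?sideGoal]
  case sideGoal =>
    intro j _ hj
    simp only [Matrix.smul_apply, Matrix.single, Matrix.of_apply]
    rw [if_neg (by rintro ⟨-, h⟩; exact hj h), smul_zero]
  simp only [Matrix.smul_apply, Matrix.single, Matrix.of_apply, and_true,
    Mmat]
  by_cases hcond : ((i:ℕ) : ZMod d) = ((k:ℕ) : ZMod d) + ((a - b : ℤ) : ZMod d)
  · have hrow : rowf d a b k = i := by
      apply Fin.ext
      rw [← ZMod.val_cast_of_lt (rowf d a b k).isLt, ← ZMod.val_cast_of_lt i.isLt,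
        rowf_cast, hcond]
    rw [if_pos hcond, if_pos hrow, hrow]
  · have hrow : ¬ (rowf d a b k = i) := by
      intro hrow
      apply hcond
      rw [← hrow, rowf_cast]
    rw [if_neg hcond, if_neg hrow, smul_zero]

end expand

lemma zmod_sub_zero_iff {d : ℕ} [NeZero d] (c c' : ZMod d) :
    ((((c.val:ℤ) - (c'.val:ℤ)) : ℤ) : ZMod d) = 0 ↔ c' = c := by
  push_cast [ZMod.natCast_val, ZMod.cast_id]
  rw [sub_eq_zero, eq_comm]

section maps
variable (d : ℕ) (ζ : ℂ) (A : Type) [Ring A] [Algebra ℂ A] (S : SkewLaurent2Algebra d ζ A)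

def Lmap : A →ₗ[ℂ] Matrix (Fin d) (Fin d) R2 :=
  S.basis.constr ℂ fun q => Mmat d ζ q.1 q.2.1 q.2.2

lemma Lmap_b (a b : ℤ) (c : ZMod d) : Lmap d ζ A S (S.b a b c) = Mmat d ζ a b c := by
  rw [← S.basis_eq]
  exact S.basis.constr_basis ℂ _ (a, b, c)

def invElt [NeZero d] (q : Σ _i : Fin d, Σ _j : Fin d, ℤ × ℤ) : A :=
  (d:ℂ)⁻¹ • ∑ c : ZMod d,
    ζ ^ (-(((c.val:ℕ):ℤ) * ((q.2.1:ℕ):ℤ))) •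
      S.b (q.2.2.2 + ((q.1:ℕ):ℤ) - ((q.2.1:ℕ):ℤ) + d * q.2.2.1) q.2.2.2 c

def Psi [NeZero d] : Matrix (Fin d) (Fin d) R2 →ₗ[ℂ] A := (bM d).constr ℂ (invElt d ζ A S)

variable {d ζ}

lemma Psi_std [NeZero d] (i j : Fin d) (m p : ℤ) :
    Psi d ζ A S (Matrix.single i j (mono m p)) = invElt d ζ A S ⟨i, j, (m, p)⟩ := by
  rw [← bM_apply, Psi, Module.Basis.constr_basis]

lemma LPsi [NeZero d] (hd : 0 < d) (hζ : IsPrimitiveRoot ζ d)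
    (q : Σ _i : Fin d, Σ _j : Fin d, ℤ × ℤ) :
    Lmap d ζ A S (Psi d ζ A S (bM d q)) = bM d q := by
  have hne : ζ ≠ 0 := hζ.ne_zero hd.ne'
  have hdC : (d:ℂ) ≠ 0 := by exact_mod_cast hd.ne'
  have hdZ : (d:ℤ) ≠ 0 := by exact_mod_cast hd.ne'
  obtain ⟨i, j, m, p⟩ := q
  rw [Psi, Module.Basis.constr_basis, invElt]
  simp only
  rw [map_smul, map_sum]
  simp_rw [map_smul, Lmap_b]
  rw [bM_apply]
  refine Matrix.ext fun i' k => ?_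
  rw [Matrix.smul_apply, Matrix.sum_apply]
  simp_rw [Matrix.smul_apply]
  simp only [Mmat, Matrix.of_apply]
  have ha : (p + ((i:ℕ):ℤ) - ((j:ℕ):ℤ) + (d:ℤ) * m - p : ℤ) = ((i:ℕ):ℤ) - ((j:ℕ):ℤ) + (d:ℤ)*m := by
    ring
  simp_rw [ha]
  by_cases hcond : ((i':ℕ) : ZMod d) = ((k:ℕ) : ZMod d) + ((((i:ℕ):ℤ) - ((j:ℕ):ℤ) + (d:ℤ)*m : ℤ) : ZMod d)
  · simp_rw [if_pos hcond, smul_smul, ← zpow_add₀ hne]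
    have hexp : ∀ c : ZMod d, (-(((c.val:ℕ):ℤ) * ((j:ℕ):ℤ)) + ((c.val:ℕ):ℤ) * ((k:ℕ):ℤ))
        = ((c.val:ℕ):ℤ) * (((k:ℕ):ℤ) - ((j:ℕ):ℤ)) := fun c => by ring
    simp_rw [hexp]
    rw [← Finset.sum_smul, sum_zpow_zmod hd hζ]
    by_cases hkj : k = j
    · subst hkj
      rw [if_pos ((fin_sub_zero_iff hd k k).mpr rfl)]
      have hi' : i' = i := by
        apply Fin.ext
        rw [← ZMod.val_cast_of_lt i'.isLt, ← ZMod.val_cast_of_lt i.isLt]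
        congr 1
        rw [hcond]
        push_cast [ZMod.natCast_self, zero_mul]
        ring
      subst hi'
      have hm : (((i':ℕ):ℤ) - ((k:ℕ):ℤ) + (d:ℤ)*m + ((k:ℕ):ℤ) - ((i':ℕ):ℤ)) = (d:ℤ) * m := by ring
      rw [hm, Int.mul_ediv_cancel_left _ hdZ]
      rw [smul_smul, inv_mul_cancel₀ hdC, one_smul]
      simp [Matrix.single]
    · rw [if_neg (fun h => hkj ((fin_sub_zero_iff hd j k).mp h)), zero_smul, smul_zero]
      simp only [Matrix.single, Matrix.of_apply]
      rw [if_neg (by rintro ⟨-, rfl⟩; exact hkj rfl)]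
  · simp_rw [if_neg hcond, smul_zero, Finset.sum_const_zero, smul_zero]
    simp only [Matrix.single, Matrix.of_apply]
    rw [if_neg]
    rintro ⟨rfl, rfl⟩
    apply hcond
    push_cast [ZMod.natCast_self, zero_mul]
    ring

end maps

section maps2
variable {d : ℕ} {ζ : ℂ} (A : Type) [Ring A] [Algebra ℂ A] (S : SkewLaurent2Algebra d ζ A)

lemma PsiL [NeZero d] (hd : 0 < d) (hζ : IsPrimitiveRoot ζ d) (pp : ℤ × ℤ × ZMod d) :
    Psi d ζ A S (Lmap d ζ A S (S.basis pp)) = S.basis pp := by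
  have hne : ζ ≠ 0 := hζ.ne_zero hd.ne'
  have hdC : (d:ℂ) ≠ 0 := by exact_mod_cast hd.ne'
  obtain ⟨a, b, c⟩ := pp
  rw [S.basis_eq, Lmap_b, M_expand a b c, map_sum]
  simp_rw [map_smul, Psi_std]
  have hEj : ∀ j : Fin d,
      (b + ((rowf d a b j:ℕ):ℤ) - ((j:ℕ):ℤ)
        + (d:ℤ) * ((a - b + ((j:ℕ):ℤ) - ((rowf d a b j:ℕ):ℤ))/(d:ℤ))) = a := by
    intro j
    have hdvd : (d:ℤ) ∣ (a - b + ((j:ℕ):ℤ) - ((rowf d a b j:ℕ):ℤ)) :=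
      cond_dvd hd (rowf_cast a b j)
    rw [Int.mul_ediv_cancel' hdvd]
    ring
  simp only [invElt]
  simp_rw [hEj]
  have hcoef : ∀ (j : Fin d) (c' : ZMod d),
      ζ ^ (((c.val:ℕ):ℤ) * ((j:ℕ):ℤ)) * (d:ℂ)⁻¹ * ζ ^ (-(((c'.val:ℕ):ℤ) * ((j:ℕ):ℤ)))
        = (d:ℂ)⁻¹ * ζ ^ ((((c.val:ℕ):ℤ) - ((c'.val:ℕ):ℤ)) * ((j:ℕ):ℤ)) := by
    intro j c'
    have h1 : ζ ^ (((c.val:ℕ):ℤ) * ((j:ℕ):ℤ)) * ζ ^ (-(((c'.val:ℕ):ℤ) * ((j:ℕ):ℤ)))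
        = ζ ^ ((((c.val:ℕ):ℤ) - ((c'.val:ℕ):ℤ)) * ((j:ℕ):ℤ)) := by
      rw [← zpow_add₀ hne]
      congr 1
      ring
    rw [← h1]
    ring
  simp_rw [smul_smul, Finset.smul_sum, smul_smul, hcoef]
  rw [Finset.sum_comm]
  simp_rw [← Finset.sum_smul, ← Finset.mul_sum, sum_zpow_fin hd hζ, zmod_sub_zero_iff]
  rw [Finset.sum_eq_single_of_mem c (Finset.mem_univ _)
    (fun b' _ hb => by rw [if_neg hb, mul_zero, zero_smul])]
  rw [if_pos rfl, inv_mul_cancel₀ hdC, one_smul]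

end maps2

section alg
variable {d : ℕ} {ζ : ℂ} (A : Type) [Ring A] [Algebra ℂ A] (S : SkewLaurent2Algebra d ζ A)

lemma Lmap_one (hd : 0 < d) : Lmap d ζ A S 1 = 1 := by
  rw [← S.b_one, Lmap_b, M_one hd]

lemma Lmap_mul (hd : 0 < d) (hζ : IsPrimitiveRoot ζ d) (x y : A) :
    Lmap d ζ A S (x * y) = Lmap d ζ A S x * Lmap d ζ A S y := by
  have hb : ∀ (p q : ℤ × ℤ × ZMod d),
      Lmap d ζ A S (S.basis p * S.basis q) = Lmap d ζ A S (S.basis p) * Lmap d ζ A S (S.basis q) := by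
    rintro ⟨a, b, c⟩ ⟨e, f, g⟩
    rw [S.basis_eq, S.basis_eq, S.b_mul, map_smul, Lmap_b, Lmap_b, Lmap_b, M_mul hd hζ]
  have h2 : ∀ (q : ℤ × ℤ × ZMod d) (x : A),
      Lmap d ζ A S (x * S.basis q) = Lmap d ζ A S x * Lmap d ζ A S (S.basis q) := by
    intro q x
    have heq : (Lmap d ζ A S).comp (LinearMap.mulRight ℂ (S.basis q))
        = (LinearMap.mulRight ℂ (Lmap d ζ A S (S.basis q))).comp (Lmap d ζ A S) :=
      S.basis.ext fun p => by simpa using hb p q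
    simpa using LinearMap.congr_fun heq x
  have heq : (Lmap d ζ A S).comp (LinearMap.mulLeft ℂ x)
      = (LinearMap.mulLeft ℂ (Lmap d ζ A S x)).comp (Lmap d ζ A S) :=
    S.basis.ext fun q => by simpa using h2 q x
  simpa using LinearMap.congr_fun heq y

noncomputable def skewEquiv [NeZero d] (hd : 0 < d) (hζ : IsPrimitiveRoot ζ d) :
    A ≃ₐ[ℂ] Matrix (Fin d) (Fin d) R2 :=
  AlgEquiv.ofLinearEquiv
    (LinearEquiv.ofLinear (Lmap d ζ A S) (Psi d ζ A S)
      ((bM d).ext fun q => by simpa using LPsi A S hd hζ q)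
      (S.basis.ext fun p => by simpa using PsiL A S hd hζ p))
    (Lmap_one A S hd) (Lmap_mul A S hd hζ)

end alg

section lie
variable {L₁ L₂ : Type} [LieRing L₁] [LieAlgebra ℂ L₁] [LieRing L₂] [LieAlgebra ℂ L₂]

lemma derived_nonempty (e : L₁ ≃ₗ⁅ℂ⁆ L₂) :
    Nonempty ((⁅(⊤ : LieIdeal ℂ L₁), (⊤ : LieIdeal ℂ L₁)⁆ : LieIdeal ℂ L₁) ≃ₗ⁅ℂ⁆
      (⁅(⊤ : LieIdeal ℂ L₂), (⊤ : LieIdeal ℂ L₂)⁆ : LieIdeal ℂ L₂)) := by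
  set I₁ : LieIdeal ℂ L₁ := ⁅(⊤ : LieIdeal ℂ L₁), (⊤ : LieIdeal ℂ L₁)⁆ with hI₁
  set I₂ : LieIdeal ℂ L₂ := ⁅(⊤ : LieIdeal ℂ L₂), (⊤ : LieIdeal ℂ L₂)⁆ with hI₂
  have hsurj : Function.Surjective e.toLieHom := e.surjective
  have htop : LieIdeal.map e.toLieHom ⊤ = ⊤ := by
    rw [← LieHom.idealRange_eq_map]
    exact e.toLieHom.idealRange_eq_top_of_surjective hsurj
  have hmap : LieIdeal.map e.toLieHom I₁ = I₂ := by
    rw [hI₁, hI₂, LieIdeal.map_bracket_eq _ hsurj, htop]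
  have hmem : ∀ x : L₁, x ∈ I₁ → e x ∈ I₂ := by
    intro x hx
    rw [← hmap]
    rw [← LieSubmodule.mem_toSubmodule, LieIdeal.coe_map_of_surjective hsurj]
    exact Submodule.mem_map_of_mem hx
  have hmem' : ∀ y : L₂, y ∈ I₂ → e.symm y ∈ I₁ := by
    intro y hy
    rw [← hmap, ← LieSubmodule.mem_toSubmodule, LieIdeal.coe_map_of_surjective hsurj] at hy
    obtain ⟨x, hx, hxy⟩ := hy
    have hyx : e.symm y = x := by
      apply e.injective
      exact (e.apply_symm_apply y).trans hxy.symm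
    rwa [hyx]
  refine ⟨{ toFun := fun x => ⟨e x, hmem x x.2⟩
            invFun := fun y => ⟨e.symm y, hmem' y y.2⟩
            left_inv := fun x => Subtype.ext (e.symm_apply_apply x)
            right_inv := fun y => Subtype.ext (e.apply_symm_apply y)
            map_add' := fun x y => Subtype.ext (map_add e.toLinearEquiv x.1 y.1)
            map_smul' := fun r x => Subtype.ext (map_smul e.toLinearEquiv r x.1)
            map_lie' := ?_ }⟩
  rintro ⟨x, hx⟩ ⟨y, hy⟩
  apply Subtype.ext
  simp only
  rw [LieIdeal.coe_bracket_of_module, LieIdeal.coe_bracket_of_module]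
  exact e.map_lie x y

end lie


attribute [local instance 100] LieRing.ofAssociativeRing

theorem stmt_11 (d : ℕ) (hd : 0 < d) (ζ : ℂ) (hζ : IsPrimitiveRoot ζ d)
    (A : Type) [Ring A] [Algebra ℂ A] (S : SkewLaurent2Algebra d ζ A)
    (n : ℕ) (hn : 1 ≤ n) :
    Nonempty
      ((⁅(⊤ : LieIdeal ℂ (Matrix (Fin n) (Fin n) A)),
          (⊤ : LieIdeal ℂ (Matrix (Fin n) (Fin n) A))⁆ :
          LieIdeal ℂ (Matrix (Fin n) (Fin n) A))
        ≃ₗ⁅ℂ⁆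
        (⁅(⊤ : LieIdeal ℂ (Matrix (Fin (n * d)) (Fin (n * d))
              (LaurentPolynomial (LaurentPolynomial ℂ)))),
          (⊤ : LieIdeal ℂ (Matrix (Fin (n * d)) (Fin (n * d))
              (LaurentPolynomial (LaurentPolynomial ℂ))))⁆ :
          LieIdeal ℂ (Matrix (Fin (n * d)) (Fin (n * d))
            (LaurentPolynomial (LaurentPolynomial ℂ))))) := by
  haveI : NeZero d := ⟨hd.ne'⟩
  have E0 : A ≃ₐ[ℂ] Matrix (Fin d) (Fin d) R2 := skewEquiv A S hd hζ
  have E1 : Matrix (Fin n) (Fin n) A ≃ₐ[ℂ] Matrix (Fin n) (Fin n) (Matrix (Fin d) (Fin d) R2) :=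
    E0.mapMatrix
  have E2 : Matrix (Fin n) (Fin n) (Matrix (Fin d) (Fin d) R2)
      ≃ₐ[ℂ] Matrix (Fin n × Fin d) (Fin n × Fin d) R2 :=
    Matrix.compAlgEquiv (Fin n) (Fin d) R2 ℂ
  have E3 : Matrix (Fin n × Fin d) (Fin n × Fin d) R2 ≃ₐ[ℂ] Matrix (Fin (n * d)) (Fin (n * d)) R2 :=
    Matrix.reindexAlgEquiv ℂ R2 finProdFinEquiv
  exact derived_nonempty ((E1.trans (E2.trans E3)).toLieEquiv)

end
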